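/- In the regularized team model, assume the matrix P defined by P(j,i) = λ_i(r)/(2ρ_j) for i ≠ j and P(j,j) = 0 has spectral radius less than 1. Then the best response operator B(γ) = (B₁(γ^{-1}),…,B_N(γ^{-N})) has a unique fixed point γ* in ∏Γ_i, and the iterates γ^{k+1} = B(γ^k) from any initial profile converge to γ* in the L¹ policy norm. -/

import Mathlib

open Finset Filter

attribute [local instance] Matrix.linftyOpNormedRing Matrix.linftyOpNormedAlgebra

/-- Telescoping identity for a difference of products. -/
lemma tele_prod {ι : Type*} [LinearOrder ι] (s : Finset ι) (f g : ι → ℝ) :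
    ∏ k ∈ s, f k - ∏ k ∈ s, g k =
      ∑ i ∈ s, (f i - g i) *
        ((∏ k ∈ s.filter (· < i), f k) * ∏ k ∈ s.filter (i < ·), g k) := by
  classical
  induction s using Finset.induction_on_max with
  | empty => simp
  | insert a t ha ih =>
    have ha' : a ∉ t := fun h => lt_irrefl a (ha a h)
    rw [Finset.sum_insert ha', Finset.prod_insert ha', Finset.prod_insert ha']
    have h1 : (insert a t).filter (· < a) = t := by
      rw [Finset.filter_insert, if_neg (lt_irrefl a)]
      exact Finset.filter_true_of_mem (fun x hx => ha x hx)
    have h2 : (insert a t).filter (a < ·) = ∅ := by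
      rw [Finset.filter_insert, if_neg (lt_irrefl a)]
      exact Finset.filter_false_of_mem (fun x hx => not_lt.2 (le_of_lt (ha x hx)))
    have h3 : ∀ i ∈ t, (insert a t).filter (· < i) = t.filter (· < i) := by
      intro i hi
      rw [Finset.filter_insert, if_neg (not_lt.2 (le_of_lt (ha i hi)))]
    have h4 : ∀ i ∈ t, (insert a t).filter (i < ·) = insert a (t.filter (i < ·)) := by
      intro i hi
      rw [Finset.filter_insert, if_pos (ha i hi)]
    rw [h1, h2]
    have h5 : ∑ i ∈ t, (f i - g i) *
        ((∏ k ∈ (insert a t).filter (· < i), f k) * ∏ k ∈ (insert a t).filter (i < ·), g k)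
        = ∑ i ∈ t, (f i - g i) *
        ((∏ k ∈ t.filter (· < i), f k) * (g a * ∏ k ∈ t.filter (i < ·), g k)) := by
      refine Finset.sum_congr rfl fun i hi => ?_
      rw [h3 i hi, h4 i hi, Finset.prod_insert (fun h => ha' (Finset.mem_of_mem_filter a h))]
    rw [h5]
    have h6 : ∑ i ∈ t, (f i - g i) *
        ((∏ k ∈ t.filter (· < i), f k) * (g a * ∏ k ∈ t.filter (i < ·), g k))
        = g a * ∑ i ∈ t, (f i - g i) *
        ((∏ k ∈ t.filter (· < i), f k) * ∏ k ∈ t.filter (i < ·), g k) := by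
      rw [Finset.mul_sum]; refine Finset.sum_congr rfl fun i hi => ?_; ring
    rw [h6, ← ih]
    simp only [Finset.prod_empty]
    ring



section Split
variable {ι : Type*} [DecidableEq ι] {κ : ι → Type*}

lemma split_sum [Fintype ι] [∀ k, Fintype (κ k)] (i : ι) (Ψ : (∀ k, κ k) → ℝ) :
    ∑ x : ∀ k, κ k, Ψ x =
      ∑ v : κ i, ∑ x' : ∀ k : { k // k ≠ i }, κ k, Ψ ((Equiv.piSplitAt i κ).symm (v, x')) := by
  rw [← Equiv.sum_comp (Equiv.piSplitAt i κ).symm Ψ, Fintype.sum_prod_type]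

lemma split_apply_same (i : ι) (v : κ i) (x' : ∀ k : { k // k ≠ i }, κ k) :
    (Equiv.piSplitAt i κ).symm (v, x') i = v := by
  simp [Equiv.piSplitAt_symm_apply]

lemma split_apply_ne (i : ι) (v : κ i) (x' : ∀ k : { k // k ≠ i }, κ k) {k : ι} (h : k ≠ i) :
    (Equiv.piSplitAt i κ).symm (v, x') k = x' ⟨k, h⟩ := by
  simp [Equiv.piSplitAt_symm_apply, h]

lemma split_update (i : ι) (v w : κ i) (x' : ∀ k : { k // k ≠ i }, κ k) :
    Function.update ((Equiv.piSplitAt i κ).symm (v, x')) i w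
      = (Equiv.piSplitAt i κ).symm (w, x') := by
  funext k
  by_cases h : k = i
  · subst h; rw [Function.update_self, split_apply_same]
  · rw [Function.update_of_ne h, split_apply_ne i v x' h, split_apply_ne i w x' h]

end Split

/-- Centering bound. -/
lemma centering {V : Type*} [Fintype V] [Nonempty V] (f d : V → ℝ) (lam : ℝ)
    (hf : ∀ v w, f v - f w ≤ lam) (hd : ∑ v, d v = 0) :
    |∑ v, f v * d v| ≤ lam / 2 * ∑ v, |d v| := by
  classical
  set M := univ.sup' univ_nonempty f with hMdef
  set m := univ.inf' univ_nonempty f with hmdef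
  have hM : ∀ v, f v ≤ M := fun v => Finset.le_sup' f (mem_univ v)
  have hm : ∀ v, m ≤ f v := fun v => Finset.inf'_le f (mem_univ v)
  have hMm : M - m ≤ lam := by
    obtain ⟨v, -, hv⟩ := Finset.exists_mem_eq_sup' univ_nonempty f
    obtain ⟨w, -, hw⟩ := Finset.exists_mem_eq_inf' univ_nonempty f
    rw [hMdef, hmdef, hv, hw]; exact hf v w
  have key : ∀ v, |f v - (M + m) / 2| ≤ lam / 2 := by
    intro v
    rw [abs_le]
    constructor <;> [linarith [hm v, hMm]; linarith [hM v, hMm]]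
  have h1 : ∑ v, f v * d v = ∑ v, (f v - (M + m) / 2) * d v := by
    simp only [sub_mul, Finset.sum_sub_distrib, ← Finset.mul_sum, hd, mul_zero, sub_zero]
  calc |∑ v, f v * d v| = |∑ v, (f v - (M + m) / 2) * d v| := by rw [h1]
    _ ≤ ∑ v, |(f v - (M + m) / 2) * d v| := Finset.abs_sum_le_sum_abs _ _
    _ ≤ ∑ v, lam / 2 * |d v| := by
        refine Finset.sum_le_sum fun v _ => ?_
        rw [abs_mul]
        exact mul_le_mul_of_nonneg_right (key v) (abs_nonneg _)
    _ = lam / 2 * ∑ v, |d v| := by rw [Finset.mul_sum]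

/-- Key kernel bound. -/
lemma lemK {N : ℕ} {Y U : Fin N → Type*} [∀ i, Fintype (Y i)] [∀ i, Fintype (U i)]
    [∀ i, Nonempty (Y i)] [∀ i, Nonempty (U i)]
    (F : (∀ k, Y k) → (∀ k, U k) → ℝ) (i : Fin N) (lamI : ℝ)
    (hF : ∀ y u v w, F y (Function.update u i v) - F y (Function.update u i w) ≤ lamI)
    (d : Y i → U i → ℝ) (hd : ∀ yi, ∑ v, d yi v = 0)
    (w : ∀ k, Y k → U k → ℝ) (hw : ∀ k yk uk, 0 ≤ w k yk uk) :
    |∑ y : ∀ k, Y k, ∑ u : ∀ k, U k,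
        F y u * d (y i) (u i) * ∏ k ∈ univ.erase i, w k (y k) (u k)|
      ≤ lamI / 2 * (∑ yi, ∑ ui, |d yi ui|) *
        ∏ k ∈ univ.erase i, (∑ yk, ∑ uk, w k yk uk) := by
  classical
  have v0 : U i := Classical.arbitrary _
  have yi0 : Y i := Classical.arbitrary _
  set W : (∀ k, Y k) → (∀ k, U k) → ℝ :=
    fun y u => ∏ k ∈ univ.erase i, w k (y k) (u k) with hWdef
  set c : Y i → ℝ := fun yi => lamI / 2 * ∑ v, |d yi v| with hcdef
  have hWnn : ∀ y u, 0 ≤ W y u := fun y u => Finset.prod_nonneg fun k _ => hw _ _ _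
  have hWindU : ∀ y (v v' : U i) u',
      W y ((Equiv.piSplitAt i U).symm (v, u')) = W y ((Equiv.piSplitAt i U).symm (v', u')) := by
    intro y v v' u'
    refine Finset.prod_congr rfl fun k hk => ?_
    have hki : k ≠ i := (Finset.mem_erase.1 hk).1
    rw [split_apply_ne i v u' hki, split_apply_ne i v' u' hki]
  have hWindY : ∀ (yi yi' : Y i) y' u,
      W ((Equiv.piSplitAt i Y).symm (yi, y')) u = W ((Equiv.piSplitAt i Y).symm (yi', y')) u := by
    intro yi yi' y' u
    refine Finset.prod_congr rfl fun k hk => ?_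
    have hki : k ≠ i := (Finset.mem_erase.1 hk).1
    rw [split_apply_ne i yi y' hki, split_apply_ne i yi' y' hki]
  have inner : ∀ y, |∑ u, F y u * d (y i) (u i) * W y u|
      ≤ c (y i) * ∑ u', W y ((Equiv.piSplitAt i U).symm (v0, u')) := by
    intro y
    rw [split_sum i (fun u => F y u * d (y i) (u i) * W y u), Finset.sum_comm]
    have step : ∀ u', ∑ v, F y ((Equiv.piSplitAt i U).symm (v, u'))
          * d (y i) (((Equiv.piSplitAt i U).symm (v, u')) i)
          * W y ((Equiv.piSplitAt i U).symm (v, u'))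
        = (∑ v, F y (Function.update ((Equiv.piSplitAt i U).symm (v0, u')) i v) * d (y i) v)
          * W y ((Equiv.piSplitAt i U).symm (v0, u')) := by
      intro u'
      rw [Finset.sum_mul]
      refine Finset.sum_congr rfl fun v _ => ?_
      rw [split_apply_same, ← split_update i v0 v u']
      congr 1
      rw [split_update i v0 v u']
      exact hWindU y v v0 u'
    rw [Finset.sum_congr rfl fun u' _ => step u']
    have hcent : ∀ u', |∑ v, F y (Function.update ((Equiv.piSplitAt i U).symm (v0, u')) i v)
        * d (y i) v| ≤ c (y i) := by
      intro u'
      exact centering _ _ lamI (fun v w' => hF y _ v w') (hd (y i))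
    calc |∑ u', (∑ v, F y (Function.update ((Equiv.piSplitAt i U).symm (v0, u')) i v)
            * d (y i) v) * W y ((Equiv.piSplitAt i U).symm (v0, u'))|
        ≤ ∑ u', |(∑ v, F y (Function.update ((Equiv.piSplitAt i U).symm (v0, u')) i v)
            * d (y i) v) * W y ((Equiv.piSplitAt i U).symm (v0, u'))| :=
          Finset.abs_sum_le_sum_abs _ _
      _ ≤ ∑ u', c (y i) * W y ((Equiv.piSplitAt i U).symm (v0, u')) := by
          refine Finset.sum_le_sum fun u' _ => ?_
          rw [abs_mul, abs_of_nonneg (hWnn _ _)]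
          exact mul_le_mul_of_nonneg_right (hcent u') (hWnn _ _)
      _ = c (y i) * ∑ u', W y ((Equiv.piSplitAt i U).symm (v0, u')) := by rw [Finset.mul_sum]
  have outer : |∑ y, ∑ u, F y u * d (y i) (u i) * W y u|
      ≤ ∑ y, c (y i) * ∑ u', W y ((Equiv.piSplitAt i U).symm (v0, u')) :=
    (Finset.abs_sum_le_sum_abs _ _).trans (Finset.sum_le_sum fun y _ => inner y)
  have hsplitY : ∑ y, c (y i) * ∑ u', W y ((Equiv.piSplitAt i U).symm (v0, u'))
      = (∑ yi, c yi) * ∑ y' : ∀ k : { k // k ≠ i }, Y k,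
          ∑ u', W ((Equiv.piSplitAt i Y).symm (yi0, y')) ((Equiv.piSplitAt i U).symm (v0, u')) := by
    rw [split_sum i (fun y => c (y i) * ∑ u', W y ((Equiv.piSplitAt i U).symm (v0, u'))),
      Finset.sum_mul]
    refine Finset.sum_congr rfl fun yi _ => ?_
    have h1 : ∀ y', c (((Equiv.piSplitAt i Y).symm (yi, y')) i)
          * ∑ u', W ((Equiv.piSplitAt i Y).symm (yi, y')) ((Equiv.piSplitAt i U).symm (v0, u'))
        = c yi * ∑ u', W ((Equiv.piSplitAt i Y).symm (yi0, y'))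
            ((Equiv.piSplitAt i U).symm (v0, u')) := by
      intro y'
      rw [split_apply_same]
      congr 1
      exact Finset.sum_congr rfl fun u' _ => hWindY yi yi0 y' _
    rw [Finset.sum_congr rfl fun y' _ => h1 y', ← Finset.mul_sum]
  have hmem : ∀ x : Fin N, x ∈ univ.erase i ↔ x ≠ i := fun x => by simp [Finset.mem_erase]
  have hfinal : ∑ y' : ∀ k : { k // k ≠ i }, Y k,
        ∑ u', W ((Equiv.piSplitAt i Y).symm (yi0, y')) ((Equiv.piSplitAt i U).symm (v0, u'))
      = ∏ k ∈ univ.erase i, (∑ yk, ∑ uk, w k yk uk) := by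
    have h1 : ∀ (y' : ∀ k : { k // k ≠ i }, Y k) (u' : ∀ k : { k // k ≠ i }, U k),
        W ((Equiv.piSplitAt i Y).symm (yi0, y')) ((Equiv.piSplitAt i U).symm (v0, u'))
        = ∏ k : { k : Fin N // k ≠ i }, w k (y' k) (u' k) := by
      intro y' u'
      rw [hWdef]
      simp only
      rw [Finset.prod_subtype (univ.erase i) hmem]
      refine Finset.prod_congr rfl fun k _ => ?_
      rw [split_apply_ne i yi0 y' k.2, split_apply_ne i v0 u' k.2]
    calc ∑ y' : ∀ k : { k // k ≠ i }, Y k,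
          ∑ u', W ((Equiv.piSplitAt i Y).symm (yi0, y')) ((Equiv.piSplitAt i U).symm (v0, u'))
        = ∑ y' : ∀ k : { k // k ≠ i }, Y k,
            ∑ u' : ∀ k : { k // k ≠ i }, U k, ∏ k : { k : Fin N // k ≠ i }, w k (y' k) (u' k) :=
          Finset.sum_congr rfl fun y' _ => Finset.sum_congr rfl fun u' _ => h1 y' u'
      _ = ∑ y' : ∀ k : { k // k ≠ i }, Y k, ∏ k : { k : Fin N // k ≠ i }, ∑ v, w k (y' k) v :=
          Finset.sum_congr rfl fun y' _ => (Fintype.prod_sum (fun (k : { k // k ≠ i }) (v : U k) => w k (y' k) v)).symm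
      _ = ∏ k : { k : Fin N // k ≠ i }, ∑ x, ∑ v, w k x v :=
          (Fintype.prod_sum (fun (k : { k // k ≠ i }) (x : Y k) => ∑ v, w k x v)).symm
      _ = ∏ k ∈ univ.erase i, (∑ yk, ∑ uk, w k yk uk) :=
          (Finset.prod_subtype (univ.erase i) hmem (fun k => ∑ x, ∑ v, w k x v)).symm
  refine outer.trans ?_
  rw [hsplitY, hfinal]
  have hsc : ∑ yi, c yi = lamI / 2 * ∑ yi, ∑ ui, |d yi ui| := by
    rw [hcdef, ← Finset.mul_sum]
  rw [hsc]



lemma entry_le_norm {n : Type*} [Fintype n] [DecidableEq n] (A : Matrix n n ℂ) (i j : n) :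
    ‖A i j‖ ≤ ‖A‖ := by
  have h : ‖A i j‖₊ ≤ ‖A‖₊ := by
    rw [Matrix.linfty_opNNNorm_def]
    exact le_trans (Finset.single_le_sum (f := fun j => ‖A i j‖₊)
      (fun _ _ => zero_le) (Finset.mem_univ j)) (Finset.le_sup (f := fun i => ∑ j, ‖A i j‖₊) (Finset.mem_univ i))
  exact_mod_cast h

lemma matrix_pow_bound {N : ℕ} (hN : 0 < N) (P : Matrix (Fin N) (Fin N) ℝ)
    (hspec : ∀ μ ∈ spectrum ℂ (P.map (Complex.ofReal ·)), ‖μ‖ < 1) :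
    ∃ C r : ℝ, 0 ≤ C ∧ 0 ≤ r ∧ r < 1 ∧ ∀ k j i, |(P ^ k) j i| ≤ C * r ^ k := by
  haveI : Nonempty (Fin N) := ⟨⟨0, hN⟩⟩
  set Pc : Matrix (Fin N) (Fin N) ℂ := P.map (Complex.ofReal ·) with hPc
  -- spectral radius < 1
  have hspne : (spectrum ℂ Pc).Nonempty := spectrum.nonempty Pc
  obtain ⟨z, hz, hzmax⟩ := (spectrum.isCompact Pc).exists_isMaxOn hspne
    (continuous_norm.continuousOn)
  have hR : spectralRadius ℂ Pc < 1 := by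
    have hle : spectralRadius ℂ Pc ≤ (‖z‖₊ : ENNReal) := by
      rw [spectralRadius]
      exact iSup₂_le fun μ hμ => by exact_mod_cast hzmax hμ
    refine lt_of_le_of_lt hle ?_
    have : ‖z‖ < 1 := hspec z hz
    exact_mod_cast this
  obtain ⟨r', hRr, hr1⟩ := ENNReal.lt_iff_exists_nnreal_btwn.1 hR
  have hr'pos : 0 < r' := by
    rcases eq_or_lt_of_le (zero_le : (0:NNReal) ≤ r') with h | h
    · exfalso; rw [← h] at hRr; exact (not_lt.2 zero_le) (by exact_mod_cast hRr)
    · exact h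
  have hr'lt : r' < 1 := by exact_mod_cast hr1
  -- Gelfand's formula
  have hG := spectrum.pow_nnnorm_pow_one_div_tendsto_nhds_spectralRadius Pc
  have hev : ∀ᶠ n : ℕ in atTop, ((‖Pc ^ n‖₊ : ENNReal)) ^ (1 / (n : ℝ)) < (r' : ENNReal) :=
    hG.eventually_lt_const hRr
  obtain ⟨n0, hn0⟩ := eventually_atTop.1 hev
  set n1 := max n0 1 with hn1
  have hpow : ∀ n, n1 ≤ n → ‖Pc ^ n‖ ≤ (r' : ℝ) ^ n := by
    intro n hn
    have hnn : (n : ℝ) ≠ 0 := by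
      have : 1 ≤ n := le_trans (le_max_right n0 1) hn
      exact_mod_cast Nat.one_le_iff_ne_zero.1 this
    have h1 := hn0 n (le_trans (le_max_left n0 1) hn)
    have h2 : (((‖Pc ^ n‖₊ : ENNReal)) ^ (1 / (n : ℝ))) ^ (n : ℝ)
        < ((r' : ENNReal)) ^ (n : ℝ) :=
      ENNReal.rpow_lt_rpow h1 (by positivity)
    rw [← ENNReal.rpow_mul, one_div, inv_mul_cancel₀ hnn, ENNReal.rpow_one,
      ENNReal.rpow_natCast] at h2
    have h3 : ‖Pc ^ n‖₊ ≤ r' ^ n := by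
      have := le_of_lt h2
      rwa [← ENNReal.coe_pow, ENNReal.coe_le_coe] at this
    calc ‖Pc ^ n‖ = ((‖Pc ^ n‖₊ : ℝ)) := rfl
      _ ≤ ((r' ^ n : NNReal) : ℝ) := by exact_mod_cast h3
      _ = (r' : ℝ) ^ n := by push_cast; ring
  -- constant
  have hrange : (Finset.range n1).Nonempty := ⟨0, Finset.mem_range.2 (lt_of_lt_of_le one_pos (le_max_right n0 1))⟩
  set C : ℝ := max 1 ((Finset.range n1).sup' hrange fun n => ‖Pc ^ n‖ / (r' : ℝ) ^ n) with hC
  have hrpos : (0 : ℝ) < r' := by exact_mod_cast hr'pos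
  have hC1 : (1 : ℝ) ≤ C := le_max_left _ _
  have hCbound : ∀ k, ‖Pc ^ k‖ ≤ C * (r' : ℝ) ^ k := by
    intro k
    by_cases hk : k < n1
    · have h1 : ‖Pc ^ k‖ / (r' : ℝ) ^ k ≤ C :=
        le_trans (Finset.le_sup' (fun n => ‖Pc ^ n‖ / (r' : ℝ) ^ n) (Finset.mem_range.2 hk)) (le_max_right _ _)
      have h2 : (0 : ℝ) < (r' : ℝ) ^ k := by positivity
      calc ‖Pc ^ k‖ = (‖Pc ^ k‖ / (r' : ℝ) ^ k) * (r' : ℝ) ^ k := by field_simp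
        _ ≤ C * (r' : ℝ) ^ k := mul_le_mul_of_nonneg_right h1 (le_of_lt h2)
    · have h1 : ‖Pc ^ k‖ ≤ (r' : ℝ) ^ k := hpow k (not_lt.1 hk)
      have h2 : (0 : ℝ) ≤ (r' : ℝ) ^ k := by positivity
      calc ‖Pc ^ k‖ ≤ (r' : ℝ) ^ k := h1
        _ = 1 * (r' : ℝ) ^ k := (one_mul _).symm
        _ ≤ C * (r' : ℝ) ^ k := mul_le_mul_of_nonneg_right hC1 h2
  refine ⟨C, (r' : ℝ), le_trans zero_le_one hC1, le_of_lt hrpos, by exact_mod_cast hr'lt, ?_⟩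
  intro k j i
  have hmap : Pc ^ k = (P ^ k).map (Complex.ofReal ·) := by
    rw [hPc]
    have : (P.map (Complex.ofReal ·)) = Complex.ofRealHom.mapMatrix P := rfl
    rw [this, ← map_pow]
    rfl
  have h1 : |(P ^ k) j i| = ‖(Pc ^ k) j i‖ := by
    rw [hmap]
    simp [Matrix.map_apply, Complex.norm_real]
  rw [h1]
  exact le_trans (entry_le_norm _ _ _) (hCbound k)
/-- in the regularized team model, if the matrix `P(j,i) = λ_i(r)/(2ρ_j)`
(`i ≠ j`, zero diagonal) has spectral radius `< 1`, then the best response operator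
`B(γ) = (B₁(γ^{-1}),…,B_N(γ^{-N}))` has a unique fixed point `γ*` among policy profiles,
and the iterates `γ^{k+1} = B(γ^k)` from any initial policy profile converge to `γ*` in
the `L¹` policy norm. -/
theorem stmt_15 {N : ℕ}
    {Y U : Fin N → Type*} [∀ i, Fintype (Y i)] [∀ i, Nonempty (Y i)]
    [∀ i, Fintype (U i)] [∀ i, Nonempty (U i)]
    [∀ i, DecidableEq (Y i)] [∀ i, DecidableEq (U i)]
    (r : (∀ i, Y i) → (∀ i, U i) → ℝ)
    (lam : Fin N → ℝ)
    (hlam : ∀ i, lam i =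
      Finset.univ.sup' Finset.univ_nonempty
        (fun p : (∀ k, Y k) × (∀ k, U k) =>
          Finset.univ.sup' Finset.univ_nonempty
              (fun v : U i => r p.1 (Function.update p.2 i v))
            - Finset.univ.inf' Finset.univ_nonempty
              (fun v : U i => r p.1 (Function.update p.2 i v))))
    (G : (j : Fin N) → (∀ i, Y i → U i → ℝ) → Y j → U j → ℝ)
    (hG : ∀ j γ yj uj, G j γ yj uj =
      ∑ y : ∀ i, Y i, ∑ u : ∀ i, U i,
        if y j = yj ∧ u j = uj then
          r y u * ∏ i ∈ Finset.univ.erase j,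
            (γ i (y i) (u i) * (Fintype.card (Y i) : ℝ)⁻¹)
        else 0)
    (Ω : (j : Fin N) → (U j → ℝ) → ℝ) (ρ : Fin N → ℝ) (hρ : ∀ j, 0 < ρ j)
    (hΩ : ∀ j (δ ξ : U j → ℝ),
      ((∀ v, 0 ≤ δ v) ∧ ∑ v, δ v = 1) → ((∀ v, 0 ≤ ξ v) ∧ ∑ v, ξ v = 1) →
      ∀ t : ℝ, 0 ≤ t → t ≤ 1 →
        Ω j (fun v => t * δ v + (1 - t) * ξ v) ≤
          t * Ω j δ + (1 - t) * Ω j ξ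
            - ρ j * (t * (1 - t) / 2) * (∑ v, |δ v - ξ v|) ^ 2)
    (B : (j : Fin N) → (∀ i, Y i → U i → ℝ) → Y j → U j → ℝ)
    (hB : ∀ j γ yj, ((∀ v, 0 ≤ B j γ yj v) ∧ ∑ v, B j γ yj v = 1) ∧
      ∀ δ : U j → ℝ, (∀ v, 0 ≤ δ v) → ∑ v, δ v = 1 →
        ∑ uj, G j γ yj uj * δ uj - Ω j δ ≤
          ∑ uj, G j γ yj uj * B j γ yj uj - Ω j (B j γ yj))
    (P : Matrix (Fin N) (Fin N) ℝ)
    (hPdef : ∀ j i, P j i = if i = j then 0 else lam i / (2 * ρ j))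
    (hspec : ∀ μ ∈ spectrum ℂ (P.map (Complex.ofReal ·)), ‖μ‖ < 1) :
    ∃ γstar : ∀ i, Y i → U i → ℝ,
      (∀ i yi, (∀ v, 0 ≤ γstar i yi v) ∧ ∑ v, γstar i yi v = 1) ∧
      (fun j => B j γstar) = γstar ∧
      (∀ ξ : ∀ i, Y i → U i → ℝ,
        (∀ i yi, (∀ v, 0 ≤ ξ i yi v) ∧ ∑ v, ξ i yi v = 1) →
        (fun j => B j ξ) = ξ → ξ = γstar) ∧
      ∀ γ0 : ∀ i, Y i → U i → ℝ,
        (∀ i yi, (∀ v, 0 ≤ γ0 i yi v) ∧ ∑ v, γ0 i yi v = 1) →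
        ∀ j, Tendsto
          (fun k => ∑ yj : Y j, (Fintype.card (Y j) : ℝ)⁻¹ *
            ∑ uj, |(fun γ (j' : Fin N) => B j' γ)^[k] γ0 j yj uj - γstar j yj uj|)
          atTop (nhds 0) := by
  classical
  rcases Nat.eq_zero_or_pos N with hN | hN
  · subst hN
    refine ⟨fun i => i.elim0, fun i => i.elim0, ?_, fun ξ _ _ => ?_, fun γ0 _ j => j.elim0⟩
    · funext j; exact j.elim0
    · funext i; exact i.elim0
  set Bf : (∀ i, Y i → U i → ℝ) → (∀ i, Y i → U i → ℝ) := fun γ j => B j γ with hBfdef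
  set Dv : (∀ i, Y i → U i → ℝ) → (∀ i, Y i → U i → ℝ) → Fin N → ℝ :=
    fun α β j => ∑ yj, (Fintype.card (Y j) : ℝ)⁻¹ * ∑ uj, |α j yj uj - β j yj uj| with hDvdef
  set Pol : (∀ i, Y i → U i → ℝ) → Prop :=
    fun γ => ∀ i yi, (∀ v, 0 ≤ γ i yi v) ∧ ∑ v, γ i yi v = 1 with hPoldef
  have hcardY : ∀ i, (0 : ℝ) < (Fintype.card (Y i) : ℝ) := fun i => by
    exact_mod_cast Fintype.card_pos
  have hcardU : ∀ i, (0 : ℝ) < (Fintype.card (U i) : ℝ) := fun i => by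
    exact_mod_cast Fintype.card_pos
  have hDvnn : ∀ α β j, 0 ≤ Dv α β j := by
    intro α β j
    exact Finset.sum_nonneg fun yj _ => mul_nonneg (inv_nonneg.2 (le_of_lt (hcardY j)))
      (Finset.sum_nonneg fun uj _ => abs_nonneg _)
  have hDvsymm : ∀ α β j, Dv α β j = Dv β α j := by
    intro α β j
    refine Finset.sum_congr rfl fun yj _ => ?_
    congr 1
    exact Finset.sum_congr rfl fun uj _ => abs_sub_comm _ _
  have hDvtri : ∀ α β γ' j, Dv α γ' j ≤ Dv α β j + Dv β γ' j := by
    intro α β γ' j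
    rw [hDvdef]
    simp only [← Finset.sum_add_distrib]
    refine Finset.sum_le_sum fun yj _ => ?_
    rw [← mul_add]
    refine mul_le_mul_of_nonneg_left ?_ (inv_nonneg.2 (le_of_lt (hcardY j)))
    rw [← Finset.sum_add_distrib]
    exact Finset.sum_le_sum fun uj _ => abs_sub_le _ _ _
  have hDveq : ∀ α β, (∀ j, Dv α β j = 0) → α = β := by
    intro α β h
    funext j yj uj
    have h1 := h j
    rw [hDvdef] at h1
    have h2 : ∀ yj' ∈ (univ : Finset (Y j)), 0 ≤ (Fintype.card (Y j) : ℝ)⁻¹ *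
        ∑ uj', |α j yj' uj' - β j yj' uj'| := fun yj' _ =>
      mul_nonneg (inv_nonneg.2 (le_of_lt (hcardY j))) (Finset.sum_nonneg fun _ _ => abs_nonneg _)
    have h3 := (Finset.sum_eq_zero_iff_of_nonneg h2).1 h1 yj (mem_univ yj)
    have h4 : ∑ uj', |α j yj uj' - β j yj uj'| = 0 := by
      have hne : (Fintype.card (Y j) : ℝ)⁻¹ ≠ 0 := by positivity
      exact (mul_eq_zero.1 h3).resolve_left hne
    have h5 := (Finset.sum_eq_zero_iff_of_nonneg (fun _ _ => abs_nonneg _)).1 h4 uj (mem_univ uj)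
    exact sub_eq_zero.1 (abs_eq_zero.1 h5)
  have hlam0 : ∀ i, 0 ≤ lam i := by
    intro i
    rw [hlam i]
    have p0 : (∀ k, Y k) × (∀ k, U k) := Classical.arbitrary _
    have v0 : U i := Classical.arbitrary _
    have h1 : r p0.1 (Function.update p0.2 i v0) ≤ univ.sup' univ_nonempty
        (fun v : U i => r p0.1 (Function.update p0.2 i v)) :=
      Finset.le_sup' (fun v : U i => r p0.1 (Function.update p0.2 i v)) (mem_univ v0)
    have h2 : univ.inf' univ_nonempty (fun v : U i => r p0.1 (Function.update p0.2 i v))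
        ≤ r p0.1 (Function.update p0.2 i v0) :=
      Finset.inf'_le (fun v : U i => r p0.1 (Function.update p0.2 i v)) (mem_univ v0)
    have h3 : (0:ℝ) ≤ univ.sup' univ_nonempty (fun v : U i => r p0.1 (Function.update p0.2 i v))
        - univ.inf' univ_nonempty (fun v : U i => r p0.1 (Function.update p0.2 i v)) := by linarith
    exact le_trans h3 (Finset.le_sup'
      (fun p : (∀ k, Y k) × (∀ k, U k) => univ.sup' univ_nonempty
          (fun v : U i => r p.1 (Function.update p.2 i v))
        - univ.inf' univ_nonempty (fun v : U i => r p.1 (Function.update p.2 i v)))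
      (mem_univ p0))
  have hPnn : ∀ j i, 0 ≤ P j i := by
    intro j i
    rw [hPdef]
    split_ifs
    · exact le_refl 0
    · exact div_nonneg (hlam0 i) (by linarith [hρ j])
  have hBpol : ∀ γ, Pol (Bf γ) := by
    intro γ i yi
    exact (hB i γ yi).1
  have hGdiff : ∀ j (γ ξ : ∀ i, Y i → U i → ℝ), Pol γ → Pol ξ → ∀ yj uj,
      |G j γ yj uj - G j ξ yj uj| ≤ ∑ i ∈ univ.erase j, lam i / 2 * Dv γ ξ i := by
    intro j γ ξ hγ hξ yj uj
    set w : Fin N → ∀ k, Y k → U k → ℝ := fun i => Function.update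
      (fun k yk uk => if k < i then γ k yk uk * (Fintype.card (Y k) : ℝ)⁻¹
        else ξ k yk uk * (Fintype.card (Y k) : ℝ)⁻¹) j
      (fun yk uk => if yk = yj ∧ uk = uj then (1:ℝ) else 0) with hwdef
    have hwj : ∀ i, w i j = fun yk uk => if yk = yj ∧ uk = uj then (1:ℝ) else 0 := by
      intro i
      rw [hwdef]
      exact Function.update_self _ _ _
    have hwne : ∀ (i k : Fin N), k ≠ j → w i k = fun yk uk =>
        if k < i then γ k yk uk * (Fintype.card (Y k) : ℝ)⁻¹
        else ξ k yk uk * (Fintype.card (Y k) : ℝ)⁻¹ := by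
      intro i k hk
      rw [hwdef]
      exact Function.update_of_ne hk _ _
    have hwnn : ∀ i k yk uk, 0 ≤ w i k yk uk := by
      intro i k yk uk
      by_cases hk : k = j
      · subst hk
        rw [hwj]
        dsimp only
        split_ifs
        · exact zero_le_one
        · exact le_refl 0
      · rw [hwne i k hk]
        dsimp only
        split_ifs
        · exact mul_nonneg ((hγ k yk).1 uk) (inv_nonneg.2 (le_of_lt (hcardY k)))
        · exact mul_nonneg ((hξ k yk).1 uk) (inv_nonneg.2 (le_of_lt (hcardY k)))
    have herase : ∀ i : Fin N, i ≠ j →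
        ((univ.erase i).erase j : Finset (Fin N)) = (univ.erase j).erase i := by
      intro i _
      ext k
      simp only [Finset.mem_erase, Finset.mem_univ, and_true]
      tauto
    have hfilt1 : ∀ i : Fin N,
        ((univ.erase j).erase i).filter (· < i) = (univ.erase j).filter (· < i) := by
      intro i
      ext k
      simp only [Finset.mem_filter, Finset.mem_erase, Finset.mem_univ, and_true, true_and]
      constructor
      · rintro ⟨⟨hki, hkj⟩, hlt⟩; exact ⟨hkj, hlt⟩
      · rintro ⟨hkj, hlt⟩; exact ⟨⟨ne_of_lt hlt, hkj⟩, hlt⟩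
    have hfilt2 : ∀ i : Fin N,
        ((univ.erase j).erase i).filter (fun k => ¬ k < i) = (univ.erase j).filter (i < ·) := by
      intro i
      ext k
      simp only [Finset.mem_filter, Finset.mem_erase, Finset.mem_univ, and_true, true_and]
      constructor
      · rintro ⟨⟨hki, hkj⟩, hnlt⟩; exact ⟨hkj, lt_of_le_of_ne (not_lt.1 hnlt) (Ne.symm hki)⟩
      · rintro ⟨hkj, hik⟩; exact ⟨⟨ne_of_gt hik, hkj⟩, not_lt.2 (le_of_lt hik)⟩
    have hsplit : G j γ yj uj - G j ξ yj uj
        = ∑ i ∈ univ.erase j, ∑ y : ∀ k, Y k, ∑ u : ∀ k, U k,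
            r y u * ((γ i (y i) (u i) - ξ i (y i) (u i)) * (Fintype.card (Y i) : ℝ)⁻¹)
              * ∏ k ∈ univ.erase i, w i k (y k) (u k) := by
      rw [hG j γ yj uj, hG j ξ yj uj, ← Finset.sum_sub_distrib]
      have hstep1 : ∀ y : ∀ k, Y k,
          ((∑ u : ∀ k, U k, if y j = yj ∧ u j = uj then
              r y u * ∏ i ∈ univ.erase j, (γ i (y i) (u i) * (Fintype.card (Y i) : ℝ)⁻¹) else 0)
          - ∑ u : ∀ k, U k, if y j = yj ∧ u j = uj then
              r y u * ∏ i ∈ univ.erase j, (ξ i (y i) (u i) * (Fintype.card (Y i) : ℝ)⁻¹) else 0)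
          = ∑ u : ∀ k, U k, ∑ i ∈ univ.erase j,
            r y u * ((γ i (y i) (u i) - ξ i (y i) (u i)) * (Fintype.card (Y i) : ℝ)⁻¹)
              * ∏ k ∈ univ.erase i, w i k (y k) (u k) := by
        intro y
        rw [← Finset.sum_sub_distrib]
        refine Finset.sum_congr rfl fun u _ => ?_
        by_cases hc : y j = yj ∧ u j = uj
        · rw [if_pos hc, if_pos hc, ← mul_sub,
            tele_prod (univ.erase j) (fun i => γ i (y i) (u i) * (Fintype.card (Y i) : ℝ)⁻¹)
              (fun i => ξ i (y i) (u i) * (Fintype.card (Y i) : ℝ)⁻¹),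
            Finset.mul_sum]
          refine Finset.sum_congr rfl fun i hi => ?_
          have hij : i ≠ j := (Finset.mem_erase.1 hi).1
          have hjmem : j ∈ univ.erase i := Finset.mem_erase.2 ⟨Ne.symm hij, mem_univ j⟩
          have hprodw : ∏ k ∈ univ.erase i, w i k (y k) (u k)
              = (∏ k ∈ (univ.erase j).filter (· < i),
                  γ k (y k) (u k) * (Fintype.card (Y k) : ℝ)⁻¹)
                * ∏ k ∈ (univ.erase j).filter (i < ·),
                  ξ k (y k) (u k) * (Fintype.card (Y k) : ℝ)⁻¹ := by
            rw [← Finset.mul_prod_erase _ _ hjmem]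
            have h0 : w i j (y j) (u j) = 1 := by
              simp only [hwj]
              exact if_pos hc
            rw [h0, one_mul, herase i hij,
              ← Finset.prod_filter_mul_prod_filter_not ((univ.erase j).erase i) (· < i),
              hfilt1 i, hfilt2 i]
            congr 1
            · refine Finset.prod_congr rfl fun k hk => ?_
              have hkj : k ≠ j := (Finset.mem_erase.1 (Finset.mem_filter.1 hk).1).1
              simp only [hwne i k hkj]
              exact if_pos (Finset.mem_filter.1 hk).2
            · refine Finset.prod_congr rfl fun k hk => ?_
              have hkj : k ≠ j := (Finset.mem_erase.1 (Finset.mem_filter.1 hk).1).1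
              simp only [hwne i k hkj]
              exact if_neg (not_lt.2 (le_of_lt (Finset.mem_filter.1 hk).2))
          rw [hprodw]
          ring
        · rw [if_neg hc, if_neg hc, sub_self]
          symm
          refine Finset.sum_eq_zero fun i hi => ?_
          have hij : i ≠ j := (Finset.mem_erase.1 hi).1
          have hjmem : j ∈ univ.erase i := Finset.mem_erase.2 ⟨Ne.symm hij, mem_univ j⟩
          rw [Finset.prod_eq_zero hjmem (by simp only [hwj]; exact if_neg hc), mul_zero]
      rw [Finset.sum_congr rfl fun y _ => hstep1 y,
        Finset.sum_congr rfl fun y (_ : y ∈ univ) => Finset.sum_comm, Finset.sum_comm]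
    rw [hsplit]
    refine (Finset.abs_sum_le_sum_abs _ _).trans (Finset.sum_le_sum fun i hi => ?_)
    have hij : i ≠ j := (Finset.mem_erase.1 hi).1
    have hF : ∀ (y : ∀ k, Y k) (u : ∀ k, U k) (v w' : U i),
        r y (Function.update u i v) - r y (Function.update u i w') ≤ lam i := by
      intro y u v w'
      rw [hlam i]
      have h1 : r y (Function.update u i v) ≤ univ.sup' univ_nonempty
          (fun v' : U i => r y (Function.update u i v')) :=
        Finset.le_sup' (fun v' : U i => r y (Function.update u i v')) (mem_univ v)
      have h2 : univ.inf' univ_nonempty (fun v' : U i => r y (Function.update u i v'))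
          ≤ r y (Function.update u i w') :=
        Finset.inf'_le (fun v' : U i => r y (Function.update u i v')) (mem_univ w')
      have h3 := Finset.le_sup' (fun p : (∀ k, Y k) × (∀ k, U k) =>
          univ.sup' univ_nonempty (fun v' : U i => r p.1 (Function.update p.2 i v'))
        - univ.inf' univ_nonempty (fun v' : U i => r p.1 (Function.update p.2 i v')))
        (mem_univ (y, u))
      simp only at h3
      linarith
    have hd0 : ∀ yi : Y i, ∑ v, (γ i yi v - ξ i yi v) * (Fintype.card (Y i) : ℝ)⁻¹ = 0 := by
      intro yi
      rw [← Finset.sum_mul, Finset.sum_sub_distrib, (hγ i yi).2, (hξ i yi).2, sub_self, zero_mul]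
    have hK := lemK r i (lam i) hF
      (fun yi ui => (γ i yi ui - ξ i yi ui) * (Fintype.card (Y i) : ℝ)⁻¹) hd0
      (w i) (fun k yk uk => hwnn i k yk uk)
    have habs_d : ∑ yi, ∑ ui, |(γ i yi ui - ξ i yi ui) * (Fintype.card (Y i) : ℝ)⁻¹|
        = Dv γ ξ i := by
      rw [hDvdef]
      refine Finset.sum_congr rfl fun yi _ => ?_
      rw [Finset.mul_sum]
      refine Finset.sum_congr rfl fun ui _ => ?_
      rw [abs_mul, abs_of_nonneg (inv_nonneg.2 (le_of_lt (hcardY i))), mul_comm]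
    have hsum1 : ∀ (θ : ∀ i, Y i → U i → ℝ), Pol θ → ∀ k : Fin N,
        ∑ yk : Y k, ∑ uk : U k, θ k yk uk * (Fintype.card (Y k) : ℝ)⁻¹ = 1 := by
      intro θ hθp k
      have hyk : ∀ yk : Y k, ∑ uk : U k, θ k yk uk * (Fintype.card (Y k) : ℝ)⁻¹
          = (Fintype.card (Y k) : ℝ)⁻¹ := by
        intro yk
        rw [← Finset.sum_mul, (hθp k yk).2, one_mul]
      rw [Finset.sum_congr rfl fun yk _ => hyk yk, Finset.sum_const, card_univ, nsmul_eq_mul,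
        mul_inv_cancel₀ (ne_of_gt (hcardY k))]
    have hprod1 : ∏ k ∈ univ.erase i, (∑ yk, ∑ uk, w i k yk uk) = 1 := by
      refine Finset.prod_eq_one fun k hk => ?_
      by_cases hkj : k = j
      · subst hkj
        simp only [hwj]
        have hyk : ∀ yk : Y k, (∑ uk : U k, if yk = yj ∧ uk = uj then (1:ℝ) else 0)
            = if yk = yj then 1 else 0 := by
          intro yk
          by_cases hy : yk = yj
          · simp [hy]
          · simp [hy]
        rw [Finset.sum_congr rfl fun yk _ => hyk yk]
        simp
      · simp only [hwne i k hkj]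
        by_cases hlt : k < i
        · simp only [if_pos hlt]
          exact hsum1 γ hγ k
        · simp only [if_neg hlt]
          exact hsum1 ξ hξ k
    refine le_trans ?_ (le_of_eq (by rw [habs_d, hprod1, mul_one] :
      lam i / 2 * (∑ yi, ∑ ui, |(γ i yi ui - ξ i yi ui) * (Fintype.card (Y i) : ℝ)⁻¹|)
        * ∏ k ∈ univ.erase i, (∑ yk, ∑ uk, w i k yk uk) = lam i / 2 * Dv γ ξ i))
    exact hK
  have hstrong : ∀ j (γ ξ : ∀ i, Y i → U i → ℝ) (yj : Y j),
      ρ j * (∑ v, |B j γ yj v - B j ξ yj v|) ^ 2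
        ≤ ∑ v, (G j γ yj v - G j ξ yj v) * (B j γ yj v - B j ξ yj v) := by
    intro j γ ξ yj
    have half : ∀ (g : U j → ℝ) (α β : U j → ℝ),
        ((∀ v, 0 ≤ α v) ∧ ∑ v, α v = 1) → ((∀ v, 0 ≤ β v) ∧ ∑ v, β v = 1) →
        (∀ m : U j → ℝ, (∀ v, 0 ≤ m v) → ∑ v, m v = 1 →
          ∑ v, g v * m v - Ω j m ≤ ∑ v, g v * α v - Ω j α) →
        ρ j / 2 * (∑ v, |β v - α v|) ^ 2
          ≤ (∑ v, g v * α v - Ω j α) - (∑ v, g v * β v - Ω j β) := by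
      intro g α β hα hβ hopt
      set S := ∑ v, |β v - α v| with hS
      set A := (∑ v, g v * α v - Ω j α) - (∑ v, g v * β v - Ω j β) with hA
      have hstep : ∀ t : ℝ, 0 < t → t ≤ 1 → ρ j * ((1 - t) / 2) * S ^ 2 ≤ A := by
        intro t ht0 ht1
        have hmix1 : ∀ v, 0 ≤ t * β v + (1 - t) * α v := by
          intro v
          have h1 := hα.1 v; have h2 := hβ.1 v; nlinarith
        have hmix2 : ∑ v, (t * β v + (1 - t) * α v) = 1 := by
          rw [Finset.sum_add_distrib, ← Finset.mul_sum, ← Finset.mul_sum, hα.2, hβ.2]; ring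
        have hopt' := hopt (fun v => t * β v + (1 - t) * α v) hmix1 hmix2
        have hΩ' := hΩ j β α hβ hα t (le_of_lt ht0) ht1
        have hlin : ∑ v, g v * (t * β v + (1 - t) * α v)
            = t * ∑ v, g v * β v + (1 - t) * ∑ v, g v * α v := by
          rw [Finset.mul_sum, Finset.mul_sum, ← Finset.sum_add_distrib]
          exact Finset.sum_congr rfl fun v _ => by ring
        rw [hlin] at hopt'
        have key : t * (∑ v, g v * β v - Ω j β) - t * (∑ v, g v * α v - Ω j α)
            + ρ j * (t * (1 - t) / 2) * S ^ 2 ≤ 0 := by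
          rw [hS]; linarith [hopt', hΩ']
        have h2 : t * (ρ j * ((1 - t) / 2) * S ^ 2 - A) ≤ 0 := by
          rw [hA]
          calc t * (ρ j * ((1 - t) / 2) * S ^ 2
                - ((∑ v, g v * α v - Ω j α) - (∑ v, g v * β v - Ω j β)))
              = t * (∑ v, g v * β v - Ω j β) - t * (∑ v, g v * α v - Ω j α)
                + ρ j * (t * (1 - t) / 2) * S ^ 2 := by ring
            _ ≤ 0 := key
        by_contra hcon
        push_neg at hcon
        nlinarith
      have htend : Tendsto (fun t : ℝ => ρ j * ((1 - t) / 2) * S ^ 2)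
          (nhdsWithin 0 (Set.Ioi 0)) (nhds (ρ j / 2 * S ^ 2)) := by
        have hc : Continuous (fun t : ℝ => ρ j * ((1 - t) / 2) * S ^ 2) :=
          (continuous_const.mul (((continuous_const (y := (1:ℝ))).sub
            continuous_id).div_const 2)).mul continuous_const
        have h0 : Tendsto (fun t : ℝ => ρ j * ((1 - t) / 2) * S ^ 2)
            (nhdsWithin 0 (Set.Ioi 0)) (nhds (ρ j * ((1 - (0:ℝ)) / 2) * S ^ 2)) :=
          (hc.tendsto 0).mono_left nhdsWithin_le_nhds
        have : ρ j * ((1 - (0:ℝ)) / 2) * S ^ 2 = ρ j / 2 * S ^ 2 := by ring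
        rwa [this] at h0
      refine le_of_tendsto htend ?_
      filter_upwards [Ioc_mem_nhdsGT_of_mem (Set.left_mem_Ico.2 zero_lt_one)] with t ht
      exact hstep t ht.1 ht.2
    have h1 := half (G j γ yj) (B j γ yj) (B j ξ yj) (hB j γ yj).1 (hB j ξ yj).1
      (fun m hm1 hm2 => (hB j γ yj).2 m hm1 hm2)
    have h2 := half (G j ξ yj) (B j ξ yj) (B j γ yj) (hB j ξ yj).1 (hB j γ yj).1
      (fun m hm1 hm2 => (hB j ξ yj).2 m hm1 hm2)
    have habs : ∑ v, |B j ξ yj v - B j γ yj v| = ∑ v, |B j γ yj v - B j ξ yj v| :=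
      Finset.sum_congr rfl fun v _ => abs_sub_comm _ _
    rw [habs] at h1
    have hexp : ∑ v, (G j γ yj v - G j ξ yj v) * (B j γ yj v - B j ξ yj v)
        = ((∑ v, G j γ yj v * B j γ yj v) - (∑ v, G j γ yj v * B j ξ yj v))
          - ((∑ v, G j ξ yj v * B j γ yj v) - (∑ v, G j ξ yj v * B j ξ yj v)) := by
      rw [← Finset.sum_sub_distrib, ← Finset.sum_sub_distrib, ← Finset.sum_sub_distrib]
      exact Finset.sum_congr rfl fun v _ => by ring
    rw [hexp]
    linarith [h1, h2]
  have hrow : ∀ (γ ξ : ∀ i, Y i → U i → ℝ), Pol γ → Pol ξ → ∀ j (yj : Y j),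
      ρ j * ∑ v, |B j γ yj v - B j ξ yj v| ≤ ∑ i ∈ univ.erase j, lam i / 2 * Dv γ ξ i := by
    intro γ ξ hγ hξ j yj
    have hsnn : 0 ≤ ∑ v, |B j γ yj v - B j ξ yj v| :=
      Finset.sum_nonneg fun v _ => abs_nonneg _
    have hbnd : (0:ℝ) ≤ ∑ i ∈ univ.erase j, lam i / 2 * Dv γ ξ i :=
      Finset.sum_nonneg fun i _ => mul_nonneg (by linarith [hlam0 i]) (hDvnn γ ξ i)
    rcases eq_or_lt_of_le hsnn with heq | hpos
    · rw [← heq, mul_zero]; exact hbnd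
    · have h1 := hstrong j γ ξ yj
      have h2 : ∑ v, (G j γ yj v - G j ξ yj v) * (B j γ yj v - B j ξ yj v)
          ≤ (∑ i ∈ univ.erase j, lam i / 2 * Dv γ ξ i) * ∑ v, |B j γ yj v - B j ξ yj v| := by
        calc ∑ v, (G j γ yj v - G j ξ yj v) * (B j γ yj v - B j ξ yj v)
            ≤ ∑ v, |(G j γ yj v - G j ξ yj v) * (B j γ yj v - B j ξ yj v)| :=
              Finset.sum_le_sum fun v _ => le_abs_self _
          _ = ∑ v, |G j γ yj v - G j ξ yj v| * |B j γ yj v - B j ξ yj v| :=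
              Finset.sum_congr rfl fun v _ => abs_mul _ _
          _ ≤ ∑ v, (∑ i ∈ univ.erase j, lam i / 2 * Dv γ ξ i) * |B j γ yj v - B j ξ yj v| :=
              Finset.sum_le_sum fun v _ => mul_le_mul_of_nonneg_right
                (hGdiff j γ ξ hγ hξ yj v) (abs_nonneg _)
          _ = _ := by rw [← Finset.mul_sum]
      have h3 : ρ j * (∑ v, |B j γ yj v - B j ξ yj v|) * (∑ v, |B j γ yj v - B j ξ yj v|)
          ≤ (∑ i ∈ univ.erase j, lam i / 2 * Dv γ ξ i) * ∑ v, |B j γ yj v - B j ξ yj v| := by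
        calc ρ j * (∑ v, |B j γ yj v - B j ξ yj v|) * (∑ v, |B j γ yj v - B j ξ yj v|)
            = ρ j * (∑ v, |B j γ yj v - B j ξ yj v|) ^ 2 := by ring
          _ ≤ _ := le_trans h1 h2
      exact le_of_mul_le_mul_right h3 hpos
  have hcontr : ∀ (γ ξ : ∀ i, Y i → U i → ℝ), Pol γ → Pol ξ → ∀ j,
      Dv (Bf γ) (Bf ξ) j ≤ ∑ i, P j i * Dv γ ξ i := by
    intro γ ξ hγ hξ j
    have key : ∀ yj : Y j, ∑ v, |B j γ yj v - B j ξ yj v| ≤ ∑ i, P j i * Dv γ ξ i := by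
      intro yj
      have h1 := hrow γ ξ hγ hξ j yj
      have h2 : ρ j * ∑ i, P j i * Dv γ ξ i = ∑ i ∈ univ.erase j, lam i / 2 * Dv γ ξ i := by
        rw [Finset.mul_sum, ← Finset.add_sum_erase _ (fun i => ρ j * (P j i * Dv γ ξ i))
          (mem_univ j)]
        rw [hPdef j j, if_pos rfl, zero_mul, mul_zero, zero_add]
        refine Finset.sum_congr rfl fun i hi => ?_
        rw [hPdef j i, if_neg (Finset.mem_erase.1 hi).1]
        have hρj : ρ j ≠ 0 := ne_of_gt (hρ j)
        field_simp
      have h3 : ρ j * ∑ v, |B j γ yj v - B j ξ yj v| ≤ ρ j * ∑ i, P j i * Dv γ ξ i := by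
        rw [h2]; exact h1
      exact le_of_mul_le_mul_left h3 (hρ j)
    have hexp : Dv (Bf γ) (Bf ξ) j
        = ∑ yj, (Fintype.card (Y j) : ℝ)⁻¹ * ∑ v, |B j γ yj v - B j ξ yj v| := by
      simp only [hDvdef, hBfdef]
    rw [hexp]
    calc ∑ yj, (Fintype.card (Y j) : ℝ)⁻¹ * ∑ v, |B j γ yj v - B j ξ yj v|
        ≤ ∑ yj : Y j, (Fintype.card (Y j) : ℝ)⁻¹ * (∑ i, P j i * Dv γ ξ i) :=
          Finset.sum_le_sum fun yj _ => mul_le_mul_of_nonneg_left (key yj)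
            (inv_nonneg.2 (le_of_lt (hcardY j)))
      _ = (∑ _yj : Y j, (Fintype.card (Y j) : ℝ)⁻¹) * (∑ i, P j i * Dv γ ξ i) := by
          rw [← Finset.sum_mul]
      _ = ∑ i, P j i * Dv γ ξ i := by
          rw [Finset.sum_const, card_univ, nsmul_eq_mul,
            mul_inv_cancel₀ (ne_of_gt (hcardY j)), one_mul]
  have hiter : ∀ (γ ξ : ∀ i, Y i → U i → ℝ), Pol γ → Pol ξ → ∀ k j,
      Dv (Bf^[k] γ) (Bf^[k] ξ) j ≤ ∑ i, (P ^ k) j i * Dv γ ξ i := by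
    intro γ ξ hγ hξ k
    induction k with
    | zero =>
      intro j
      simp only [Function.iterate_zero, id_eq, pow_zero]
      have : ∑ i, (1 : Matrix (Fin N) (Fin N) ℝ) j i * Dv γ ξ i = Dv γ ξ j := by
        rw [Finset.sum_eq_single j]
        · rw [Matrix.one_apply_eq, one_mul]
        · intro i _ hij; rw [Matrix.one_apply_ne (Ne.symm hij), zero_mul]
        · intro h; exact absurd (Finset.mem_univ j) h
      rw [this]
    | succ k ih =>
      intro j
      have hpols : Pol (Bf^[k] γ) := by
        clear ih
        induction k with
        | zero => simpa using hγ
        | succ k ih2 => rw [Function.iterate_succ_apply']; exact hBpol _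
      have hpols' : Pol (Bf^[k] ξ) := by
        clear ih
        induction k with
        | zero => simpa using hξ
        | succ k ih2 => rw [Function.iterate_succ_apply']; exact hBpol _
      calc Dv (Bf^[k+1] γ) (Bf^[k+1] ξ) j
          = Dv (Bf (Bf^[k] γ)) (Bf (Bf^[k] ξ)) j := by
            rw [Function.iterate_succ_apply', Function.iterate_succ_apply']
        _ ≤ ∑ i, P j i * Dv (Bf^[k] γ) (Bf^[k] ξ) i := hcontr _ _ hpols hpols' j
        _ ≤ ∑ i, P j i * ∑ l, (P ^ k) i l * Dv γ ξ l := by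
            refine Finset.sum_le_sum fun i _ => ?_
            exact mul_le_mul_of_nonneg_left (ih i) (hPnn j i)
        _ = ∑ l, (P ^ (k+1)) j l * Dv γ ξ l := by
            rw [pow_succ']
            simp only [Matrix.mul_apply, Finset.sum_mul, Finset.mul_sum]
            rw [Finset.sum_comm]
            refine Finset.sum_congr rfl fun l _ => Finset.sum_congr rfl fun i _ => by ring
  obtain ⟨C, rr, hC0, hr0, hr1, hPk⟩ := matrix_pow_bound hN P hspec
  have hgeo : ∀ (γ ξ : ∀ i, Y i → U i → ℝ), Pol γ → Pol ξ → ∀ k j,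
      Dv (Bf^[k] γ) (Bf^[k] ξ) j ≤ C * rr ^ k * ∑ i, Dv γ ξ i := by
    intro γ ξ hγ hξ k j
    refine (hiter γ ξ hγ hξ k j).trans ?_
    rw [Finset.mul_sum]
    refine Finset.sum_le_sum fun i _ => ?_
    exact mul_le_mul_of_nonneg_right (le_trans (le_abs_self _) (hPk k j i)) (hDvnn γ ξ i)
  set γ0u : ∀ i, Y i → U i → ℝ := fun i _ _ => (Fintype.card (U i) : ℝ)⁻¹ with hγ0udef
  have hγ0upol : Pol γ0u := by
    intro i yi
    constructor
    · intro v
      rw [hγ0udef]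
      exact inv_nonneg.2 (le_of_lt (hcardU i))
    · rw [hγ0udef]
      simp only
      rw [Finset.sum_const, card_univ, nsmul_eq_mul, mul_inv_cancel₀ (ne_of_gt (hcardU i))]
  have hseqPol : ∀ (γ : ∀ i, Y i → U i → ℝ), Pol γ → ∀ n, Pol (Bf^[n] γ) := by
    intro γ hγ n
    induction n with
    | zero => simpa using hγ
    | succ n ih => rw [Function.iterate_succ_apply']; exact hBpol _
  have hcoord : ∀ (α β : ∀ i, Y i → U i → ℝ) (j : Fin N) yj uj,
      |α j yj uj - β j yj uj| ≤ (Fintype.card (Y j) : ℝ) * Dv α β j := by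
    intro α β j yj uj
    have h1 : (Fintype.card (Y j) : ℝ)⁻¹ * |α j yj uj - β j yj uj| ≤ Dv α β j := by
      rw [hDvdef]
      refine le_trans ?_ (Finset.single_le_sum (f := fun yj' => (Fintype.card (Y j) : ℝ)⁻¹ *
        ∑ uj', |α j yj' uj' - β j yj' uj'|) (fun yj' _ => mul_nonneg (inv_nonneg.2
          (le_of_lt (hcardY j))) (Finset.sum_nonneg fun _ _ => abs_nonneg _)) (mem_univ yj))
      refine mul_le_mul_of_nonneg_left ?_ (inv_nonneg.2 (le_of_lt (hcardY j)))
      exact Finset.single_le_sum (f := fun uj' => |α j yj uj' - β j yj uj'|)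
        (fun _ _ => abs_nonneg _) (mem_univ uj)
    calc |α j yj uj - β j yj uj|
        = (Fintype.card (Y j) : ℝ) * ((Fintype.card (Y j) : ℝ)⁻¹ * |α j yj uj - β j yj uj|) := by
          rw [← mul_assoc, mul_inv_cancel₀ (ne_of_gt (hcardY j)), one_mul]
      _ ≤ (Fintype.card (Y j) : ℝ) * Dv α β j :=
          mul_le_mul_of_nonneg_left h1 (le_of_lt (hcardY j))
  set M0 : ℝ := ∑ i, Dv γ0u (Bf γ0u) i with hM0def
  have hM0nn : 0 ≤ M0 := Finset.sum_nonneg fun i _ => hDvnn _ _ i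
  set KK : ℝ := (∑ j, (Fintype.card (Y j) : ℝ)) * (C * M0) with hKKdef
  have hcardsum : ∀ j : Fin N, (Fintype.card (Y j) : ℝ) ≤ ∑ j', (Fintype.card (Y j') : ℝ) :=
    fun j => Finset.single_le_sum (f := fun j' => (Fintype.card (Y j') : ℝ))
      (fun j' _ => le_of_lt (hcardY j')) (mem_univ j)
  have hdistb : ∀ n, dist (Bf^[n] γ0u) (Bf^[n+1] γ0u) ≤ KK * rr ^ n := by
    intro n
    have hKKnn : 0 ≤ KK * rr ^ n := by
      refine mul_nonneg ?_ (pow_nonneg hr0 n)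
      exact mul_nonneg (Finset.sum_nonneg fun j _ => le_of_lt (hcardY j)) (mul_nonneg hC0 hM0nn)
    rw [dist_pi_le_iff hKKnn]
    intro j
    rw [dist_pi_le_iff hKKnn]
    intro yj
    rw [dist_pi_le_iff hKKnn]
    intro uj
    rw [Real.dist_eq]
    have h1 : Dv (Bf^[n] γ0u) (Bf^[n+1] γ0u) j ≤ C * rr ^ n * M0 := by
      have h2 := hgeo γ0u (Bf γ0u) hγ0upol (hBpol γ0u) n j
      rwa [← Function.iterate_succ_apply] at h2
    calc |Bf^[n] γ0u j yj uj - Bf^[n+1] γ0u j yj uj|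
        ≤ (Fintype.card (Y j) : ℝ) * Dv (Bf^[n] γ0u) (Bf^[n+1] γ0u) j := hcoord _ _ j yj uj
      _ ≤ (Fintype.card (Y j) : ℝ) * (C * rr ^ n * M0) :=
          mul_le_mul_of_nonneg_left h1 (le_of_lt (hcardY j))
      _ ≤ (∑ j', (Fintype.card (Y j') : ℝ)) * (C * rr ^ n * M0) :=
          mul_le_mul_of_nonneg_right (hcardsum j)
            (mul_nonneg (mul_nonneg hC0 (pow_nonneg hr0 n)) hM0nn)
      _ = KK * rr ^ n := by rw [hKKdef]; ring
  have hcauchy : CauchySeq (fun n => Bf^[n] γ0u) :=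
    cauchySeq_of_le_geometric rr KK hr1 hdistb
  obtain ⟨γstar, hlim⟩ := cauchySeq_tendsto_of_complete hcauchy
  have hlimc : ∀ (j : Fin N) yj uj, Tendsto (fun n => Bf^[n] γ0u j yj uj) atTop
      (nhds (γstar j yj uj)) := by
    intro j yj uj
    exact tendsto_pi_nhds.1 (tendsto_pi_nhds.1 (tendsto_pi_nhds.1 hlim j) yj) uj
  have hstarPol : Pol γstar := by
    intro i yi
    constructor
    · intro v
      exact ge_of_tendsto' (hlimc i yi v) (fun n => (hseqPol γ0u hγ0upol n i yi).1 v)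
    · have h1 : Tendsto (fun n => ∑ v, Bf^[n] γ0u i yi v) atTop
          (nhds (∑ v, γstar i yi v)) := tendsto_finset_sum _ (fun v _ => hlimc i yi v)
      have h2 : (fun n => ∑ v, Bf^[n] γ0u i yi v) = fun _ => (1:ℝ) :=
        funext fun n => (hseqPol γ0u hγ0upol n i yi).2
      rw [h2] at h1
      exact tendsto_nhds_unique h1 tendsto_const_nhds
  have hDvlim : ∀ (j : Fin N), Tendsto (fun n => Dv (Bf^[n] γ0u) γstar j) atTop (nhds 0) := by
    intro j
    have h1 : Tendsto (fun n => ∑ yj, (Fintype.card (Y j) : ℝ)⁻¹ *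
        ∑ uj, |Bf^[n] γ0u j yj uj - γstar j yj uj|) atTop
        (nhds (∑ yj, (Fintype.card (Y j) : ℝ)⁻¹ * ∑ uj, |γstar j yj uj - γstar j yj uj|)) := by
      refine tendsto_finset_sum _ fun yj _ => ?_
      refine Tendsto.const_mul _ ?_
      refine tendsto_finset_sum _ fun uj _ => ?_
      exact ((hlimc j yj uj).sub tendsto_const_nhds).abs
    simp only [sub_self, abs_zero, Finset.sum_const_zero, mul_zero] at h1
    simp only [hDvdef]
    exact h1
  have hfix : Bf γstar = γstar := by
    apply hDveq
    intro j
    have hb : ∀ n, Dv (Bf γstar) γstar j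
        ≤ (∑ i, P j i * Dv (Bf^[n] γ0u) γstar i) + Dv (Bf^[n+1] γ0u) γstar j := by
      intro n
      have h1 : Dv (Bf γstar) γstar j
          ≤ Dv (Bf γstar) (Bf^[n+1] γ0u) j + Dv (Bf^[n+1] γ0u) γstar j := hDvtri _ _ _ j
      have h2 : Dv (Bf γstar) (Bf^[n+1] γ0u) j ≤ ∑ i, P j i * Dv (Bf^[n] γ0u) γstar i := by
        have h3 : Dv (Bf γstar) (Bf (Bf^[n] γ0u)) j ≤ ∑ i, P j i * Dv γstar (Bf^[n] γ0u) i :=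
          hcontr _ _ hstarPol (hseqPol γ0u hγ0upol n) j
        rw [Function.iterate_succ_apply']
        refine h3.trans (le_of_eq ?_)
        refine Finset.sum_congr rfl fun i _ => ?_
        rw [hDvsymm]
      linarith
    have hto : Tendsto (fun n => (∑ i, P j i * Dv (Bf^[n] γ0u) γstar i)
        + Dv (Bf^[n+1] γ0u) γstar j) atTop (nhds 0) := by
      have h1 : Tendsto (fun n => ∑ i, P j i * Dv (Bf^[n] γ0u) γstar i) atTop (nhds 0) := by
        have h2 := tendsto_finset_sum (univ : Finset (Fin N))
          (fun i (_ : i ∈ univ) => (hDvlim i).const_mul (P j i))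
        simpa using h2
      have h2 : Tendsto (fun n => Dv (Bf^[n+1] γ0u) γstar j) atTop (nhds 0) := by
        have h3 := (hDvlim j).comp (tendsto_add_atTop_nat 1)
        exact h3
      simpa using h1.add h2
    have hle : Dv (Bf γstar) γstar j ≤ 0 := ge_of_tendsto hto (Eventually.of_forall hb)
    exact le_antisymm hle (hDvnn _ _ j)
  have hstariter : ∀ k, Bf^[k] γstar = γstar := fun k => Function.iterate_fixed hfix k
  have hgeoz : Tendsto (fun k : ℕ => rr ^ k) atTop (nhds 0) :=
    tendsto_pow_atTop_nhds_zero_of_lt_one hr0 hr1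
  refine ⟨γstar, hstarPol, hfix, ?_, ?_⟩
  · intro ξ hξp hξfix
    apply hDveq
    intro j
    have hξpol : Pol ξ := hξp
    have hfix1 : ∀ k, Bf^[k] ξ = ξ := fun k => Function.iterate_fixed hξfix k
    have hb : ∀ k, Dv ξ γstar j ≤ C * rr ^ k * ∑ i, Dv ξ γstar i := by
      intro k
      have h1 := hgeo ξ γstar hξpol hstarPol k j
      rwa [hfix1 k, hstariter k] at h1
    have hto : Tendsto (fun k => C * rr ^ k * ∑ i, Dv ξ γstar i) atTop (nhds 0) := by
      have h1 := (hgeoz.const_mul C).mul_const (∑ i, Dv ξ γstar i)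
      simpa using h1
    have hle : Dv ξ γstar j ≤ 0 := ge_of_tendsto hto (Eventually.of_forall hb)
    exact le_antisymm hle (hDvnn _ _ j)
  · intro γ0 hγ0 j
    have hγ0pol : Pol γ0 := hγ0
    have hb : ∀ k, Dv (Bf^[k] γ0) γstar j ≤ C * rr ^ k * ∑ i, Dv γ0 γstar i := by
      intro k
      have h1 := hgeo γ0 γstar hγ0pol hstarPol k j
      rwa [hstariter k] at h1
    have hto : Tendsto (fun k => C * rr ^ k * ∑ i, Dv γ0 γstar i) atTop (nhds 0) := by
      have h1 := (hgeoz.const_mul C).mul_const (∑ i, Dv γ0 γstar i)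
      simpa using h1
    have hmain : Tendsto (fun k => Dv (Bf^[k] γ0) γstar j) atTop (nhds 0) :=
      squeeze_zero (fun k => hDvnn _ _ j) hb hto
    simp only [hDvdef] at hmain
    exact hmain
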